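/- arXiv:1010.0661 — 4 statements merged into one kernel-verified Lean document; each statement's English description precedes it below -/
import Mathlib

section
/- With U, Φ, φ and D₁ as above, if ρ : V → U is a C¹ diffeomorphism of an open set V ⊂ ℝ^{d+1} onto U, then D₁[Φ∘ρ](y) = det(∂ρ/∂y)(y) · (D₁Φ)(ρ(y)) for all y ∈ V, where Φ∘ρ is paired with φ∘ρ in the definition of D₁. -/
/-- `⟨D₁Φ(y), z⟩ = det [[0, ∂φ(y)],[z, ∂Φ(y)]]`. -/
noncomputable def D1 {N n m : ℕ} (h : m + n = N + 1)
    (Φ : (Fin N → ℝ) → Fin n → ℝ) (φ : (Fin N → ℝ) → Fin m → ℝ)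
    (y : Fin N → ℝ) (z : Fin n → ℝ) : ℝ :=
  Matrix.det (Matrix.of fun (r c : Fin (N + 1)) =>
    Fin.addCases (motive := fun _ => ℝ)
      (fun i : Fin m =>
        Fin.cases (0 : ℝ)
          (fun j : Fin N => fderiv ℝ (fun y' => φ y' i) y (Pi.single j 1)) c)
      (fun i : Fin n =>
        Fin.cases (z i)
          (fun j : Fin N => fderiv ℝ (fun y' => Φ y' i) y (Pi.single j 1)) c)
      (Fin.cast h.symm r))

lemma clm_apply_eq_sum {N : ℕ} (L : (Fin N → ℝ) →L[ℝ] ℝ) (v : Fin N → ℝ) :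
    L v = ∑ k, v k * L (Pi.single k 1) := by
  have hv : v = ∑ k, v k • (Pi.single k (1 : ℝ) : Fin N → ℝ) := by
    ext i
    simp [Pi.single_apply, Finset.sum_apply]
  conv_lhs => rw [hv]
  rw [map_sum]
  simp [smul_eq_mul]

lemma chain_entry {N : ℕ} (f : (Fin N → ℝ) → ℝ) (ρ : (Fin N → ℝ) → (Fin N → ℝ))
    (y : Fin N → ℝ) (hρ : ∀ i, DifferentiableAt ℝ (fun y' => ρ y' i) y)
    (hf : DifferentiableAt ℝ f (ρ y)) (j : Fin N) :
    fderiv ℝ (fun y' => f (ρ y')) y (Pi.single j 1) =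
      ∑ k, fderiv ℝ f (ρ y) (Pi.single k 1) * fderiv ℝ (fun y' => ρ y' k) y (Pi.single j 1) := by
  have hρd : DifferentiableAt ℝ ρ y := differentiableAt_pi.mpr hρ
  have hcomp : fderiv ℝ (fun y' => f (ρ y')) y = (fderiv ℝ f (ρ y)).comp (fderiv ℝ ρ y) :=
    fderiv_comp y hf hρd
  rw [hcomp]
  simp only [ContinuousLinearMap.comp_apply]
  have hpi : fderiv ℝ ρ y (Pi.single j 1) =
      fun k => fderiv ℝ (fun y' => ρ y' k) y (Pi.single j 1) := by
    rw [fderiv_pi hρ]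
    rfl
  rw [hpi, clm_apply_eq_sum]
  exact Finset.sum_congr rfl fun k _ => by ring

/-- If `ρ : V → U` is a `C¹` diffeomorphism, then
`D₁[Φ∘ρ](y) = det(∂ρ/∂y)(y) · (D₁Φ)(ρ(y))`, where on the left `D₁` is computed from the
data `(Φ∘ρ, φ∘ρ)`. -/
theorem stmt_5 (d n m : ℕ) (h : m + n = (d + 1) + 1)
    (U V : Set (Fin (d + 1) → ℝ)) (hU : IsOpen U) (hV : IsOpen V)
    (Φ : (Fin (d + 1) → ℝ) → Fin n → ℝ) (φ : (Fin (d + 1) → ℝ) → Fin m → ℝ)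
    (ρ : (Fin (d + 1) → ℝ) → (Fin (d + 1) → ℝ))
    (hρmaps : Set.MapsTo ρ V U) (hρinj : Set.InjOn ρ V) (hρsurj : ρ '' V = U)
    (hρ : ∀ y ∈ V, ∀ i, DifferentiableAt ℝ (fun y' => ρ y' i) y)
    (hΦ : ∀ u ∈ U, ∀ i, DifferentiableAt ℝ (fun y' => Φ y' i) u)
    (hφ : ∀ u ∈ U, ∀ i, DifferentiableAt ℝ (fun y' => φ y' i) u)
    (y : Fin (d + 1) → ℝ) (hy : y ∈ V) (z : Fin n → ℝ) :
    D1 h (Φ ∘ ρ) (φ ∘ ρ) y z =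
      Matrix.det (Matrix.of fun i j => fderiv ℝ (fun y' => ρ y' i) y (Pi.single j 1)) *
        D1 h Φ φ (ρ y) z := by
  set J : Matrix (Fin (d + 1)) (Fin (d + 1)) ℝ :=
    Matrix.of fun i j => fderiv ℝ (fun y' => ρ y' i) y (Pi.single j 1) with hJ
  set B : Matrix (Fin (d + 2)) (Fin (d + 2)) ℝ :=
    Matrix.of fun r c =>
      Fin.cases (motive := fun _ => ℝ) (Fin.cases (motive := fun _ => ℝ) 1 (fun _ => 0) c)
        (fun k => Fin.cases (motive := fun _ => ℝ) 0 (fun j => J k j) c) r with hB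
  have hdetB : B.det = J.det := by
    rw [Matrix.det_succ_column_zero, Fin.sum_univ_succ]
    simp [hB, Matrix.submatrix]
    rfl
  set M : Matrix (Fin (d + 2)) (Fin (d + 2)) ℝ :=
    Matrix.of fun (r c : Fin (d + 2)) =>
      Fin.addCases (motive := fun _ => ℝ)
        (fun i : Fin m =>
          Fin.cases (0 : ℝ)
            (fun j => fderiv ℝ (fun y' => φ y' i) (ρ y) (Pi.single j 1)) c)
        (fun i : Fin n =>
          Fin.cases (z i)
            (fun j => fderiv ℝ (fun y' => Φ y' i) (ρ y) (Pi.single j 1)) c)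
        (Fin.cast h.symm r) with hM
  have key : (Matrix.of fun (r c : Fin (d + 2)) =>
      Fin.addCases (motive := fun _ => ℝ)
        (fun i : Fin m =>
          Fin.cases (0 : ℝ)
            (fun j => fderiv ℝ (fun y' => φ (ρ y') i) y (Pi.single j 1)) c)
        (fun i : Fin n =>
          Fin.cases (z i)
            (fun j => fderiv ℝ (fun y' => Φ (ρ y') i) y (Pi.single j 1)) c)
        (Fin.cast h.symm r)) = M * B := by
    ext r c
    rw [Matrix.mul_apply]
    simp only [hM, Matrix.of_apply]
    induction (Fin.cast h.symm r) using Fin.addCases with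
    | left i =>
      simp only [Fin.addCases_left]
      induction c using Fin.cases with
      | zero => simp [hB, Fin.sum_univ_succ]
      | succ j =>
        simp only [Fin.cases_succ]
        rw [Fin.sum_univ_succ]
        simp only [hB, Matrix.of_apply, Fin.cases_zero, Fin.cases_succ, mul_zero, zero_add]
        exact chain_entry _ _ _ (hρ y hy) (hφ (ρ y) (hρmaps hy) i) j
    | right i =>
      simp only [Fin.addCases_right]
      induction c using Fin.cases with
      | zero => simp [hB, Fin.sum_univ_succ]
      | succ j =>
        simp only [Fin.cases_succ]
        rw [Fin.sum_univ_succ]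
        simp only [hB, Matrix.of_apply, Fin.cases_zero, Fin.cases_succ, mul_zero, zero_add]
        exact chain_entry _ _ _ (hρ y hy) (hΦ (ρ y) (hρmaps hy) i) j
  show Matrix.det _ = J.det * D1 h Φ φ (ρ y) z
  unfold D1
  simp only [Function.comp_apply]
  rw [key, Matrix.det_mul, hdetB]
  exact mul_comm _ _
end

section
/- Let Φ : U → ℝⁿ and φ : U → ℝ^{d−n+1} be C² on open U ⊂ ℝ^d, let Y be a C¹ vector field on U with Y φ_j = 0 for all j = 1,…,d−n+1, and define DΦ as the z-linear functional ⟨DΦ, z⟩ := det [[0, 0, ∂_yφ],[z, Φ, ∂_yΦ]]. Then ⟨Y(DΦ)(y), Φ(y)⟩ = 0 for all y ∈ U, where Y(DΦ) denotes the derivative of the functional-valued map y ↦ DΦ(y) along Y. -/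
/-- `⟨DΦ(y), z⟩ := det [[0, 0, ∂φ(y)],[z, Φ(y), ∂Φ(y)]]`. -/
noncomputable def Dop {d n m : ℕ} (h : m + n = d + 2)
    (Φ : (Fin d → ℝ) → Fin n → ℝ) (φ : (Fin d → ℝ) → Fin m → ℝ)
    (y : Fin d → ℝ) (z : Fin n → ℝ) : ℝ :=
  Matrix.det (Matrix.of fun (r c : Fin (d + 2)) =>
    Fin.addCases (motive := fun _ => ℝ)
      (fun i : Fin m =>
        Fin.cases (0 : ℝ)
          (fun c' : Fin (d + 1) =>
            Fin.cases (0 : ℝ)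
              (fun j : Fin d => fderiv ℝ (fun y' => φ y' i) y (Pi.single j 1)) c') c)
      (fun i : Fin n =>
        Fin.cases (z i)
          (fun c' : Fin (d + 1) =>
            Fin.cases (Φ y i)
              (fun j : Fin d => fderiv ℝ (fun y' => Φ y' i) y (Pi.single j 1)) c') c)
      (Fin.cast h.symm r))

/-- Determinant in the rows, as a continuous multilinear map. -/
noncomputable def detCML (k : ℕ) :
    ContinuousMultilinearMap ℝ (fun _ : Fin k => (Fin k → ℝ)) ℝ :=
  MultilinearMap.mkContinuous
    ((Matrix.detRowAlternating : (Fin k → ℝ) [⋀^Fin k]→ₗ[ℝ] ℝ).toMultilinearMap)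
    (Nat.factorial k) (by
      intro v
      have h1 : ((Matrix.detRowAlternating : (Fin k → ℝ) [⋀^Fin k]→ₗ[ℝ] ℝ).toMultilinearMap v)
          = Matrix.det (Matrix.of fun r c => v r c) := rfl
      rw [h1, Matrix.det_apply']
      calc ‖∑ σ : Equiv.Perm (Fin k),
            (Equiv.Perm.sign σ : ℝ) * ∏ i, (Matrix.of fun r c => v r c) (σ i) i‖
          ≤ ∑ σ : Equiv.Perm (Fin k), ‖(Equiv.Perm.sign σ : ℝ) * ∏ i, v (σ i) i‖ :=
            norm_sum_le _ _
        _ ≤ ∑ _σ : Equiv.Perm (Fin k), ∏ i, ‖v i‖ := by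
            refine Finset.sum_le_sum fun σ _ => ?_
            have hs : ‖((Equiv.Perm.sign σ : ℤ) : ℝ)‖ = 1 := by
              rcases Int.units_eq_one_or (Equiv.Perm.sign σ) with h | h <;> simp [h]
            rw [norm_mul, hs, one_mul]
            calc ‖∏ i, v (σ i) i‖ ≤ ∏ i, ‖v (σ i)‖ := by
                  rw [Real.norm_eq_abs, Finset.abs_prod]
                  exact Finset.prod_le_prod (fun i _ => abs_nonneg _)
                    (fun i _ => norm_le_pi_norm (v (σ i)) i)
              _ = ∏ i, ‖v i‖ := Equiv.prod_comp σ fun i => ‖v i‖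
        _ = (Nat.factorial k) * ∏ i, ‖v i‖ := by
            rw [Finset.sum_const, Finset.card_univ, Fintype.card_perm, Fintype.card_fin,
              nsmul_eq_mul])

lemma detCML_apply {k : ℕ} (v : Fin k → Fin k → ℝ) :
    detCML k v = Matrix.det (Matrix.of fun r c => v r c) := rfl

lemma detCML_alt {k : ℕ} (v : Fin k → Fin k → ℝ) :
    detCML k v = Matrix.detRowAlternating v := rfl

lemma detCML_eq_zero_of_eq {k : ℕ} (v : Fin k → Fin k → ℝ) {i j : Fin k}
    (hv : v i = v j) (hij : i ≠ j) : detCML k v = 0 := by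
  rw [detCML_alt]
  exact Matrix.detRowAlternating.map_eq_zero_of_eq v hv hij

/-- The columns of the `Dop` matrix, as functions of the base point. -/
noncomputable def gcol {d n m : ℕ} (h : m + n = d + 2)
    (Φ : (Fin d → ℝ) → Fin n → ℝ) (φ : (Fin d → ℝ) → Fin m → ℝ)
    (z : Fin n → ℝ) (c : Fin (d + 2)) (y' : Fin d → ℝ) : Fin (d + 2) → ℝ := fun r =>
  Fin.cases (motive := fun _ => ℝ)
    (Fin.addCases (motive := fun _ => ℝ) (fun _ => (0 : ℝ)) (fun i => z i) (Fin.cast h.symm r))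
    (fun c' : Fin (d + 1) =>
      Fin.cases (motive := fun _ => ℝ)
        (Fin.addCases (motive := fun _ => ℝ) (fun _ => (0 : ℝ)) (fun i => Φ y' i)
          (Fin.cast h.symm r))
        (fun j : Fin d =>
          Fin.addCases (motive := fun _ => ℝ)
            (fun i => fderiv ℝ (fun t => φ t i) y' (Pi.single j 1))
            (fun i => fderiv ℝ (fun t => Φ t i) y' (Pi.single j 1)) (Fin.cast h.symm r)) c') c

lemma Dop_eq {d n m : ℕ} (h : m + n = d + 2)
    (Φ : (Fin d → ℝ) → Fin n → ℝ) (φ : (Fin d → ℝ) → Fin m → ℝ)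
    (y' : Fin d → ℝ) (z : Fin n → ℝ) :
    Dop h Φ φ y' z = detCML (d + 2) (fun c => gcol h Φ φ z c y') := by
  rw [Dop, detCML_apply, ← Matrix.det_transpose]
  congr 1
  ext c r
  simp only [Matrix.transpose_apply, Matrix.of_apply, gcol]
  obtain ⟨ρ, rfl⟩ : ∃ ρ : Fin (m + n), r = Fin.cast h ρ := ⟨Fin.cast h.symm r, rfl⟩
  have hρ : Fin.cast h.symm (Fin.cast h ρ) = ρ := rfl
  rw [hρ]
  induction ρ using Fin.addCases with
  | left i => simp [Fin.addCases_left]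
  | right i => simp [Fin.addCases_right]

/-- Derivatives of the columns at the base point. -/
noncomputable def Dcol {d n m : ℕ} (h : m + n = d + 2)
    (Φ : (Fin d → ℝ) → Fin n → ℝ) (φ : (Fin d → ℝ) → Fin m → ℝ)
    (y : Fin d → ℝ) (z : Fin n → ℝ) (c : Fin (d + 2)) :
    (Fin d → ℝ) →L[ℝ] (Fin (d + 2) → ℝ) :=
  Fin.cases (motive := fun _ => (Fin d → ℝ) →L[ℝ] (Fin (d + 2) → ℝ)) 0
    (fun c' : Fin (d + 1) =>
      Fin.cases (motive := fun _ => (Fin d → ℝ) →L[ℝ] (Fin (d + 2) → ℝ))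
        (ContinuousLinearMap.pi fun r =>
          Fin.addCases (motive := fun _ => (Fin d → ℝ) →L[ℝ] ℝ) (fun _ => 0)
            (fun i => fderiv ℝ (fun t => Φ t i) y) (Fin.cast h.symm r))
        (fun j : Fin d => fderiv ℝ (fun y' => gcol h Φ φ z j.succ.succ y') y) c') c

/-- If the `C¹` vector field `Y` annihilates each `φ_j` on `U`, then the derivative of the
functional-valued map `y ↦ DΦ(y)` along `Y`, paired with `Φ(y)`, vanishes:
`⟨Y(DΦ)(y), Φ(y)⟩ = 0` on `U`. -/
theorem stmt_7 (d n m : ℕ) (h : m + n = d + 2)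
    (U : Set (Fin d → ℝ)) (hU : IsOpen U)
    (Φ : (Fin d → ℝ) → Fin n → ℝ) (φ : (Fin d → ℝ) → Fin m → ℝ)
    (hΦ : ∀ i, ContDiffOn ℝ 2 (fun y' => Φ y' i) U)
    (hφ : ∀ i, ContDiffOn ℝ 2 (fun y' => φ y' i) U)
    (Y : (Fin d → ℝ) → (Fin d → ℝ))
    (hY : ∀ i, ContDiffOn ℝ 1 (fun y' => Y y' i) U)
    (hYφ : ∀ y ∈ U, ∀ j, fderiv ℝ (fun y' => φ y' j) y (Y y) = 0) :
    ∀ y ∈ U, fderiv ℝ (fun y' => Dop h Φ φ y' (Φ y)) y (Y y) = 0 := by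
  intro y hy
  have hyU : U ∈ nhds y := hU.mem_nhds hy
  -- basic differentiability facts
  have hΦd : ∀ i, DifferentiableAt ℝ (fun t => Φ t i) y := fun i =>
    ((hΦ i).contDiffAt hyU).differentiableAt (by norm_num)
  have hDφ : ∀ (i : Fin m) (j : Fin d),
      DifferentiableAt ℝ (fun y' => fderiv ℝ (fun t => φ t i) y' (Pi.single j 1)) y := by
    intro i j
    have h1 : ContDiffAt ℝ 1 (fderiv ℝ (fun t => φ t i)) y :=
      ((hφ i).contDiffAt hyU).fderiv_right (by norm_num)
    exact (h1.differentiableAt one_ne_zero).clm_apply (differentiableAt_const _)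
  have hDΦ : ∀ (i : Fin n) (j : Fin d),
      DifferentiableAt ℝ (fun y' => fderiv ℝ (fun t => Φ t i) y' (Pi.single j 1)) y := by
    intro i j
    have h1 : ContDiffAt ℝ 1 (fderiv ℝ (fun t => Φ t i)) y :=
      ((hΦ i).contDiffAt hyU).fderiv_right (by norm_num)
    exact (h1.differentiableAt one_ne_zero).clm_apply (differentiableAt_const _)
  -- each column has the displayed derivative
  have hgc : ∀ c, HasFDerivAt (fun y' => gcol h Φ φ (Φ y) c y') (Dcol h Φ φ y (Φ y) c) y := by
    intro c
    induction c using Fin.cases with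
    | zero =>
      have hg0 : (fun y' => gcol h Φ φ (Φ y) 0 y') = fun _ => gcol h Φ φ (Φ y) 0 y := by
        funext y' r; simp only [gcol, Fin.cases_zero]
      have hD0 : Dcol h Φ φ y (Φ y) 0 = 0 := by simp only [Dcol, Fin.cases_zero]
      rw [hg0, hD0]
      exact hasFDerivAt_const _ _
    | succ c' =>
      induction c' using Fin.cases with
      | zero =>
        have hD : Dcol h Φ φ y (Φ y) (Fin.succ 0) = ContinuousLinearMap.pi (fun r =>
            Fin.addCases (motive := fun _ => (Fin d → ℝ) →L[ℝ] ℝ) (fun _ => 0)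
              (fun i => fderiv ℝ (fun t => Φ t i) y) (Fin.cast h.symm r)) := by
          simp only [Dcol, Fin.cases_succ, Fin.cases_zero]
        rw [hD]
        refine hasFDerivAt_pi.mpr fun r => ?_
        have hcomp : (fun y' => gcol h Φ φ (Φ y) (Fin.succ 0) y' r) = fun y' =>
            Fin.addCases (motive := fun _ => ℝ) (fun _ => (0 : ℝ)) (fun i => Φ y' i)
              (Fin.cast h.symm r) := by
          funext y'; simp only [gcol, Fin.cases_succ, Fin.cases_zero]
        rw [hcomp]
        obtain ⟨ρ, rfl⟩ : ∃ ρ : Fin (m + n), r = Fin.cast h ρ := ⟨Fin.cast h.symm r, rfl⟩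
        have hρ : Fin.cast h.symm (Fin.cast h ρ) = ρ := rfl
        rw [hρ]
        induction ρ using Fin.addCases with
        | left i =>
          simp only [Fin.addCases_left]
          exact hasFDerivAt_const _ _
        | right i =>
          simp only [Fin.addCases_right]
          exact (hΦd i).hasFDerivAt
      | succ j =>
        have hdiff : DifferentiableAt ℝ (fun y' => gcol h Φ φ (Φ y) j.succ.succ y') y := by
          refine differentiableAt_pi.mpr fun r => ?_
          have hcomp : (fun y' => gcol h Φ φ (Φ y) j.succ.succ y' r) = fun y' =>
              Fin.addCases (motive := fun _ => ℝ)
                (fun i => fderiv ℝ (fun t => φ t i) y' (Pi.single j 1))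
                (fun i => fderiv ℝ (fun t => Φ t i) y' (Pi.single j 1))
                (Fin.cast h.symm r) := by
            funext y'; simp only [gcol, Fin.cases_succ]
          rw [hcomp]
          obtain ⟨ρ, rfl⟩ : ∃ ρ : Fin (m + n), r = Fin.cast h ρ := ⟨Fin.cast h.symm r, rfl⟩
          have hρ : Fin.cast h.symm (Fin.cast h ρ) = ρ := rfl
          rw [hρ]
          induction ρ using Fin.addCases with
          | left i => simp only [Fin.addCases_left]; exact hDφ i j
          | right i => simp only [Fin.addCases_right]; exact hDΦ i j
        have hD : Dcol h Φ φ y (Φ y) j.succ.succ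
            = fderiv ℝ (fun y' => gcol h Φ φ (Φ y) j.succ.succ y') y := by
          simp only [Dcol, Fin.cases_succ]
        rw [hD]
        exact hdiff.hasFDerivAt
  -- assemble via the derivative of a multilinear map
  have hF := HasFDerivAt.multilinear_comp (detCML (d + 2)) hgc
  have hfun : (fun y' => Dop h Φ φ y' (Φ y))
      = fun y' => detCML (d + 2) (fun c => gcol h Φ φ (Φ y) c y') :=
    funext fun y' => Dop_eq h Φ φ y' (Φ y)
  have hF2 : fderiv ℝ (fun y' => detCML (d + 2) (fun c => gcol h Φ φ (Φ y) c y')) y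
      = ∑ c : Fin (d + 2), ((detCML (d + 2)).toContinuousLinearMap
          (fun c' => gcol h Φ φ (Φ y) c' y) c).comp (Dcol h Φ φ y (Φ y) c) := hF.fderiv
  rw [hfun, hF2, ContinuousLinearMap.sum_apply]
  set v : Fin (d + 2) → (Fin (d + 2) → ℝ) := fun c' => gcol h Φ φ (Φ y) c' y with hvdef
  -- representation of `Y y` in the standard basis
  have hrepr : ∑ j : Fin d, Y y j • (Pi.single j (1 : ℝ) : Fin d → ℝ) = Y y := by
    funext t
    simp [Finset.sum_apply, Pi.single_apply, mul_ite, Finset.sum_ite_eq]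
  have hL : ∀ L : (Fin d → ℝ) →L[ℝ] ℝ, ∑ j : Fin d, Y y j * L (Pi.single j 1) = L (Y y) := by
    intro L
    conv_rhs => rw [← hrepr]
    rw [map_sum]
    simp [map_smul, smul_eq_mul]
  -- the three kinds of terms
  rw [Fin.sum_univ_succ, Fin.sum_univ_succ]
  have hT : ∀ (c : Fin (d + 2)) (u : Fin (d + 2) → ℝ),
      (detCML (d + 2)).toContinuousLinearMap v c u
        = detCML (d + 2) (Function.update v c u) := by
    intro c u; rfl
  have hterm0 : (((detCML (d + 2)).toContinuousLinearMap v 0).comp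
      (Dcol h Φ φ y (Φ y) 0)) (Y y) = 0 := by
    have hD0 : Dcol h Φ φ y (Φ y) 0 = 0 := by simp only [Dcol, Fin.cases_zero]
    rw [ContinuousLinearMap.comp_apply, hD0, ContinuousLinearMap.zero_apply, hT, detCML_alt]
    exact Matrix.detRowAlternating.map_update_zero v 0
  have hv01 : v 0 = v (Fin.succ 0) := by
    funext r
    simp only [hvdef, gcol, Fin.cases_zero, Fin.cases_succ]
  have hterm1 : (((detCML (d + 2)).toContinuousLinearMap v (Fin.succ 0)).comp
      (Dcol h Φ φ y (Φ y) (Fin.succ 0))) (Y y) = 0 := by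
    rw [ContinuousLinearMap.comp_apply]
    have hD1 : Dcol h Φ φ y (Φ y) (Fin.succ 0) (Y y)
        = ∑ j : Fin d, Y y j • v (j.succ.succ) := by
      funext r
      have hD : Dcol h Φ φ y (Φ y) (Fin.succ 0) = ContinuousLinearMap.pi (fun r =>
          Fin.addCases (motive := fun _ => (Fin d → ℝ) →L[ℝ] ℝ) (fun _ => 0)
            (fun i => fderiv ℝ (fun t => Φ t i) y) (Fin.cast h.symm r)) := by
        simp only [Dcol, Fin.cases_succ, Fin.cases_zero]
      rw [hD]
      simp only [ContinuousLinearMap.pi_apply, Finset.sum_apply, Pi.smul_apply, smul_eq_mul,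
        hvdef, gcol, Fin.cases_succ, Fin.cases_zero]
      obtain ⟨ρ, rfl⟩ : ∃ ρ : Fin (m + n), r = Fin.cast h ρ := ⟨Fin.cast h.symm r, rfl⟩
      have hρ : Fin.cast h.symm (Fin.cast h ρ) = ρ := rfl
      rw [hρ]
      induction ρ using Fin.addCases with
      | left i =>
        simp only [Fin.addCases_left, ContinuousLinearMap.zero_apply]
        rw [hL (fderiv ℝ (fun t => φ t i) y), hYφ y hy i]
      | right i =>
        simp only [Fin.addCases_right]
        rw [hL (fderiv ℝ (fun t => Φ t i) y)]
    rw [hD1, map_sum]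
    refine Finset.sum_eq_zero fun j _ => ?_
    rw [map_smul, hT]
    have hne : Fin.succ (0 : Fin (d + 1)) ≠ j.succ.succ := by
      intro hcontra
      exact Fin.succ_ne_zero j ((Fin.succ_injective _ hcontra).symm)
    have : Function.update v (Fin.succ 0) (v j.succ.succ) (Fin.succ 0)
        = Function.update v (Fin.succ 0) (v j.succ.succ) (j.succ.succ) := by
      rw [Function.update_self, Function.update_of_ne hne.symm]
    rw [detCML_eq_zero_of_eq _ this hne, smul_zero]
  have htermj : ∀ j : Fin d, (((detCML (d + 2)).toContinuousLinearMap v j.succ.succ).comp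
      (Dcol h Φ φ y (Φ y) j.succ.succ)) (Y y) = 0 := by
    intro j
    rw [ContinuousLinearMap.comp_apply, hT]
    have hne0 : (0 : Fin (d + 2)) ≠ j.succ.succ := (Fin.succ_ne_zero j.succ).symm
    have hne1 : Fin.succ (0 : Fin (d + 1)) ≠ j.succ.succ := by
      intro hcontra
      exact Fin.succ_ne_zero j ((Fin.succ_injective _ hcontra).symm)
    have hne01 : (0 : Fin (d + 2)) ≠ Fin.succ (0 : Fin (d + 1)) := (Fin.succ_ne_zero 0).symm
    have heq : Function.update v j.succ.succ (Dcol h Φ φ y (Φ y) j.succ.succ (Y y)) 0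
        = Function.update v j.succ.succ (Dcol h Φ φ y (Φ y) j.succ.succ (Y y))
          (Fin.succ 0) := by
      rw [Function.update_of_ne hne0, Function.update_of_ne hne1, hv01]
    exact detCML_eq_zero_of_eq _ heq hne01
  rw [hterm0, hterm1]
  simp only [htermj]
  simp
end

section
/- Let Φ : U → ℝⁿ and φ : U → ℝ^{d−n+1} be C² on open U ⊂ ℝ^d, and let Y_i, Y_j be coordinate vector fields directions annihilating φ (i.e. Y_iφ = Y_jφ = 0, with Y_i, Y_j constant-coefficient after a choice of adapted coordinates). With DΦ defined by ⟨DΦ, z⟩ := det [[0, 0, ∂_yφ],[z, Φ, ∂_yΦ]], one has ⟨Y_i(DΦ)(y), Y_jΦ(y)⟩ = −⟨DΦ(y), Y_iY_jΦ(y)⟩ for all y ∈ U. -/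
section Aux

variable {d n m : ℕ} (h : m + n = d + 2)
  (Φ : (Fin d → ℝ) → Fin n → ℝ) (φ : (Fin d → ℝ) → Fin m → ℝ)

/-- The matrix underlying `Dop`. -/
noncomputable def DopM (y : Fin d → ℝ) (z : Fin n → ℝ) :
    Matrix (Fin (d + 2)) (Fin (d + 2)) ℝ :=
  Matrix.of fun (r c : Fin (d + 2)) =>
    Fin.addCases (motive := fun _ => ℝ)
      (fun i : Fin m =>
        Fin.cases (0 : ℝ)
          (fun c' : Fin (d + 1) =>
            Fin.cases (0 : ℝ)
              (fun j : Fin d => fderiv ℝ (fun y' => φ y' i) y (Pi.single j 1)) c') c)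
      (fun i : Fin n =>
        Fin.cases (z i)
          (fun c' : Fin (d + 1) =>
            Fin.cases (Φ y i)
              (fun j : Fin d => fderiv ℝ (fun y' => Φ y' i) y (Pi.single j 1)) c') c)
      (Fin.cast h.symm r)

lemma Dop_eq_det (y : Fin d → ℝ) (z : Fin n → ℝ) :
    Dop h Φ φ y z = (DopM h Φ φ y z).det := rfl

lemma DopM_zero (y : Fin d → ℝ) (z : Fin n → ℝ) (r : Fin (d + 2)) :
    DopM h Φ φ y z r 0 =
      Fin.addCases (motive := fun _ => ℝ) (fun _ => 0) (fun i => z i)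
        (Fin.cast h.symm r) := by
  simp only [DopM, Matrix.of_apply, Fin.cases_zero]

lemma DopM_one (y : Fin d → ℝ) (z : Fin n → ℝ) (r : Fin (d + 2)) :
    DopM h Φ φ y z r (Fin.succ 0) =
      Fin.addCases (motive := fun _ => ℝ) (fun _ => 0) (fun i => Φ y i)
        (Fin.cast h.symm r) := by
  simp only [DopM, Matrix.of_apply, Fin.cases_succ, Fin.cases_zero]

lemma DopM_succ_succ (y : Fin d → ℝ) (z : Fin n → ℝ) (r : Fin (d + 2)) (j : Fin d) :
    DopM h Φ φ y z r (Fin.succ (Fin.succ j)) =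
      Fin.addCases (motive := fun _ => ℝ)
        (fun i => fderiv ℝ (fun y' => φ y' i) y (Pi.single j 1))
        (fun i => fderiv ℝ (fun y' => Φ y' i) y (Pi.single j 1))
        (Fin.cast h.symm r) := by
  simp only [DopM, Matrix.of_apply, Fin.cases_succ]

/-- The matrices for two different `z` differ only in column `0`. -/
lemma DopM_updateColumn (y : Fin d → ℝ) (z z' : Fin n → ℝ) :
    DopM h Φ φ y z =
      (DopM h Φ φ y z').updateCol 0
        (fun r => Fin.addCases (motive := fun _ => ℝ) (fun _ => 0) (fun i => z i)
          (Fin.cast h.symm r)) := by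
  ext r c
  rw [Matrix.updateCol_apply]
  induction c using Fin.cases with
  | zero => simp [DopM_zero]
  | succ c' =>
    have hc : (Fin.succ c' : Fin (d + 2)) ≠ 0 := Fin.succ_ne_zero _
    rw [if_neg hc]
    induction c' using Fin.cases with
    | zero => rw [DopM_one, DopM_one]
    | succ j => rw [DopM_succ_succ, DopM_succ_succ]

lemma det_updateColumn_finsum {N : ℕ} (A : Matrix (Fin N) (Fin N) ℝ) (j : Fin N)
    {ι : Type*} (s : Finset ι) (u : ι → Fin N → ℝ) :
    (A.updateCol j (∑ i ∈ s, u i)).det = ∑ i ∈ s, (A.updateCol j (u i)).det := by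
  classical
  induction s using Finset.cons_induction with
  | empty =>
    simp only [Finset.sum_empty]
    exact Matrix.det_eq_zero_of_column_eq_zero j fun i => by simp
  | cons a s ha ih =>
    rw [Finset.sum_cons, Finset.sum_cons, Matrix.det_updateCol_add, ih]

/-- Linearity of `Dop` in `z`. -/
lemma Dop_linear (y : Fin d → ℝ) (z : Fin n → ℝ) :
    Dop h Φ φ y z = ∑ t, z t * Dop h Φ φ y (Pi.single t 1) := by
  have hcol :
      (fun r => Fin.addCases (motive := fun _ => ℝ) (fun _ => (0 : ℝ)) (fun i => z i)
          (Fin.cast h.symm r)) =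
        ∑ t, z t • (fun r => Fin.addCases (motive := fun _ => ℝ) (fun _ => (0 : ℝ))
          (fun i : Fin n => (Pi.single t 1 : Fin n → ℝ) i) (Fin.cast h.symm r)) := by
    funext r
    simp only [Finset.sum_apply, Pi.smul_apply, smul_eq_mul]
    generalize Fin.cast h.symm r = i
    induction i using Fin.addCases with
    | left i => simp
    | right i => simp [Pi.single_apply, mul_ite, Finset.sum_ite_eq]
  rw [Dop_eq_det, DopM_updateColumn h Φ φ y z z, hcol, det_updateColumn_finsum]
  refine Finset.sum_congr rfl fun t _ => ?_
  rw [Matrix.det_updateCol_smul, Dop_eq_det,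
    DopM_updateColumn h Φ φ y (Pi.single t 1) z]

/-- For a scalar function, `fderiv` applied to `w` is the `w`-combination of the partials. -/
lemma fderiv_apply_eq_sum (f : (Fin d → ℝ) → ℝ) (y w : Fin d → ℝ) :
    fderiv ℝ f y w = ∑ j, w j * fderiv ℝ f y (Pi.single j 1) := by
  have hs : ∀ j : Fin d, (Pi.single j (w j) : Fin d → ℝ) = w j • (Pi.single j 1 : Fin d → ℝ) := by
    intro j; funext k
    by_cases hk : k = j <;> simp [Pi.single_apply, hk]
  calc fderiv ℝ f y w = fderiv ℝ f y (∑ j, Pi.single j (w j)) := by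
        rw [Finset.univ_sum_single]
    _ = ∑ j, fderiv ℝ f y (Pi.single j (w j)) := map_sum _ _ _
    _ = ∑ j, w j * fderiv ℝ f y (Pi.single j 1) := by
        refine Finset.sum_congr rfl fun j _ => ?_
        rw [hs j, map_smul, smul_eq_mul]

/-- Vanishing: `⟨DΦ(y'), ∂_wΦ(y')⟩ = 0` when `∂_wφ = 0`. -/
lemma Dop_w_eq_zero {U : Set (Fin d → ℝ)} (w : Fin d → ℝ)
    (hwφ : ∀ y ∈ U, ∀ j, fderiv ℝ (fun y' => φ y' j) y w = 0)
    {y' : Fin d → ℝ} (hy' : y' ∈ U) :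
    Dop h Φ φ y' (fun t => fderiv ℝ (fun y'' => Φ y'' t) y' w) = 0 := by
  classical
  set A := DopM h Φ φ y' (fun t => fderiv ℝ (fun y'' => Φ y'' t) y' w) with hA
  set c : Fin (d + 2) → ℝ :=
    fun i => Fin.cases (0 : ℝ) (fun i' => Fin.cases (0 : ℝ) (fun j => w j) i') i with hc
  have key : (fun k => ∑ i, c i • A k i) = fun k => A k 0 := by
    funext k
    rw [Fin.sum_univ_succ, Fin.sum_univ_succ]
    simp only [hc, Fin.cases_zero, Fin.cases_succ, zero_smul, smul_eq_mul, zero_add]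
    rw [hA, DopM_zero]
    simp only [hA, DopM_succ_succ]
    generalize Fin.cast h.symm k = i
    induction i using Fin.addCases with
    | left i =>
      simp only [Fin.addCases_left]
      rw [← fderiv_apply_eq_sum, hwφ y' hy' i]
      simp
    | right i =>
      simp only [Fin.addCases_right]
      rw [← fderiv_apply_eq_sum]
      simp
  have h0 : c 0 = 0 := rfl
  rw [Dop_eq_det, ← hA]
  conv_lhs => rw [← Matrix.updateCol_eq_self A 0]
  rw [show (fun k => A k 0) = fun k => ∑ i, c i • A k i from key.symm,
    Matrix.det_updateCol_sum, h0, zero_smul]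

lemma diffAt_finset_prod {ι : Type*} [DecidableEq ι] {u : Finset ι}
    {g : ι → (Fin d → ℝ) → ℝ} {x : Fin d → ℝ}
    (hg : ∀ i ∈ u, DifferentiableAt ℝ (g i) x) :
    DifferentiableAt ℝ (fun y => ∏ i ∈ u, g i y) x :=
  (HasFDerivAt.finset_prod (fun i hi => (hg i hi).hasFDerivAt)).differentiableAt

/-- Differentiability of `y' ↦ Dop y' z` for fixed `z`. -/
lemma Dop_diffAt {U : Set (Fin d → ℝ)} (hU : IsOpen U)
    (hΦ : ∀ i, ContDiffOn ℝ 2 (fun y' => Φ y' i) U)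
    (hφ : ∀ i, ContDiffOn ℝ 2 (fun y' => φ y' i) U)
    (z : Fin n → ℝ) {y : Fin d → ℝ} (hy : y ∈ U) :
    DifferentiableAt ℝ (fun y' => Dop h Φ φ y' z) y := by
  classical
  have hent : ∀ r c : Fin (d + 2),
      DifferentiableAt ℝ (fun y' => DopM h Φ φ y' z r c) y := by
    intro r c
    induction c using Fin.cases with
    | zero =>
      simp only [DopM_zero]
      exact differentiableAt_const _
    | succ c' =>
      induction c' using Fin.cases with
      | zero =>
        simp only [DopM_one]
        generalize Fin.cast h.symm r = i
        induction i using Fin.addCases with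
        | left i => simp only [Fin.addCases_left]; exact differentiableAt_const _
        | right i =>
          simp only [Fin.addCases_right]
          exact ((hΦ i).differentiableOn two_ne_zero).differentiableAt (hU.mem_nhds hy)
      | succ j =>
        simp only [DopM_succ_succ]
        generalize Fin.cast h.symm r = i
        induction i using Fin.addCases with
        | left i =>
          simp only [Fin.addCases_left]
          have hd : DifferentiableAt ℝ (fderiv ℝ (fun y' => φ y' i)) y :=
            (((hφ i).fderiv_of_isOpen hU (m := 1) (by norm_num)).differentiableOn
              one_ne_zero).differentiableAt (hU.mem_nhds hy)
          exact hd.clm_apply (differentiableAt_const _)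
        | right i =>
          simp only [Fin.addCases_right]
          have hd : DifferentiableAt ℝ (fderiv ℝ (fun y' => Φ y' i)) y :=
            (((hΦ i).fderiv_of_isOpen hU (m := 1) (by norm_num)).differentiableOn
              one_ne_zero).differentiableAt (hU.mem_nhds hy)
          exact hd.clm_apply (differentiableAt_const _)
  have hrw : (fun y' => Dop h Φ φ y' z) =
      fun y' => ∑ σ : Equiv.Perm (Fin (d + 2)),
        ((Equiv.Perm.sign σ : ℤ) : ℝ) * ∏ i, DopM h Φ φ y' z (σ i) i := by
    funext y'
    rw [Dop_eq_det, Matrix.det_apply]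
    refine Finset.sum_congr rfl fun σ _ => ?_
    rw [Units.smul_def, zsmul_eq_mul]
  rw [hrw]
  refine DifferentiableAt.fun_sum fun σ _ => DifferentiableAt.const_mul ?_ _
  exact diffAt_finset_prod fun i _ => hent (σ i) i

end Aux

/-- For constant-coefficient directions `v = Y_i`, `w = Y_j` annihilating `φ`,
`⟨Y_i(DΦ)(y), Y_jΦ(y)⟩ = −⟨DΦ(y), Y_iY_jΦ(y)⟩` on `U`. -/
theorem stmt_8 (d n m : ℕ) (h : m + n = d + 2)
    (U : Set (Fin d → ℝ)) (hU : IsOpen U)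
    (Φ : (Fin d → ℝ) → Fin n → ℝ) (φ : (Fin d → ℝ) → Fin m → ℝ)
    (hΦ : ∀ i, ContDiffOn ℝ 2 (fun y' => Φ y' i) U)
    (hφ : ∀ i, ContDiffOn ℝ 2 (fun y' => φ y' i) U)
    (v w : Fin d → ℝ)
    (hvφ : ∀ y ∈ U, ∀ j, fderiv ℝ (fun y' => φ y' j) y v = 0)
    (hwφ : ∀ y ∈ U, ∀ j, fderiv ℝ (fun y' => φ y' j) y w = 0) :
    ∀ y ∈ U,
      fderiv ℝ (fun y' => Dop h Φ φ y' (fun t => fderiv ℝ (fun y'' => Φ y'' t) y w)) y v =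
        - Dop h Φ φ y
            (fun t => fderiv ℝ (fun y' => fderiv ℝ (fun y'' => Φ y'' t) y' w) y v) := by
  intro y hy
  classical
  set c : Fin n → ℝ := fun t => fderiv ℝ (fun y'' => Φ y'' t) y w with hcdef
  set g : (Fin d → ℝ) → ℝ := fun y' =>
    ∑ t, (c t - fderiv ℝ (fun y'' => Φ y'' t) y' w) * Dop h Φ φ y' (Pi.single t 1) with hg
  -- near `y`, the LHS function agrees with `g`
  have hfg : Set.EqOn (fun y' => Dop h Φ φ y' c) g U := by
    intro y' hy'
    have h2 : ∑ t, fderiv ℝ (fun y'' => Φ y'' t) y' w * Dop h Φ φ y' (Pi.single t 1) = 0 := by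
      rw [← Dop_linear]
      exact Dop_w_eq_zero h Φ φ w hwφ hy'
    show Dop h Φ φ y' c = g y'
    rw [hg]
    simp only [sub_mul, Finset.sum_sub_distrib, h2, sub_zero]
    exact Dop_linear h Φ φ y' c
  have heq : fderiv ℝ (fun y' => Dop h Φ φ y' c) y = fderiv ℝ g y :=
    Filter.EventuallyEq.fderiv_eq (Filter.eventuallyEq_of_mem (hU.mem_nhds hy) hfg)
  -- differentiate `g`
  have hzdiff : ∀ t : Fin n,
      DifferentiableAt ℝ (fun y' => fderiv ℝ (fun y'' => Φ y'' t) y' w) y := by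
    intro t
    have hd : DifferentiableAt ℝ (fderiv ℝ (fun y' => Φ y' t)) y :=
      (((hΦ t).fderiv_of_isOpen hU (m := 1) (by norm_num)).differentiableOn
        one_ne_zero).differentiableAt (hU.mem_nhds hy)
    exact hd.clm_apply (differentiableAt_const _)
  have hder : ∀ t : Fin n,
      HasFDerivAt
        (fun y' => (c t - fderiv ℝ (fun y'' => Φ y'' t) y' w) * Dop h Φ φ y' (Pi.single t 1))
        ((c t - fderiv ℝ (fun y'' => Φ y'' t) y w) •
            fderiv ℝ (fun y' => Dop h Φ φ y' (Pi.single t 1)) y +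
          Dop h Φ φ y (Pi.single t 1) •
            (-(fderiv ℝ (fun y' => fderiv ℝ (fun y'' => Φ y'' t) y' w) y))) y := by
    intro t
    exact ((hzdiff t).hasFDerivAt.const_sub (c t)).mul
      (Dop_diffAt h Φ φ hU hΦ hφ (Pi.single t 1) hy).hasFDerivAt
  have hG : HasFDerivAt g
      (∑ t, ((c t - fderiv ℝ (fun y'' => Φ y'' t) y w) •
            fderiv ℝ (fun y' => Dop h Φ φ y' (Pi.single t 1)) y +
          Dop h Φ φ y (Pi.single t 1) •
            (-(fderiv ℝ (fun y' => fderiv ℝ (fun y'' => Φ y'' t) y' w) y)))) y := by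
    rw [hg]
    exact HasFDerivAt.fun_sum fun t _ => hder t
  have hc0 : ∀ t, c t - fderiv ℝ (fun y'' => Φ y'' t) y w = 0 := fun t => sub_self _
  rw [heq, hG.fderiv]
  rw [Dop_linear h Φ φ y (fun t => fderiv ℝ (fun y' => fderiv ℝ (fun y'' => Φ y'' t) y' w) y v)]
  simp only [ContinuousLinearMap.coe_sum', Finset.sum_apply, ContinuousLinearMap.add_apply,
    ContinuousLinearMap.coe_smul', Pi.smul_apply, ContinuousLinearMap.neg_apply,
    smul_eq_mul, hc0, zero_mul, zero_add, mul_neg, ← Finset.sum_neg_distrib]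
  exact Finset.sum_congr rfl fun t _ => by ring
end

section
/- Let U ⊂ ℝⁿ × ℝⁿ be open, let ρ_i : U → ℝ^{k_i} (i = 1,…,m, Σk_i = n) and η : U → ℝ^d be C¹, and define Ψ(x, y₁,…,y_m) := (ρ₁(x,y₁),…,ρ_m(x,y_m), η(x,y₁),…,η(x,y_m)) on U* := {(x,y₁,…,y_m) : (x,y_i) ∈ U for all i}. At any point where each d×d matrix ∂_yη(x,y_i) is invertible, the Jacobian determinant of Ψ satisfies |det DΨ| = |det(Ψ₁(x,y₁); …; Ψ_m(x,y_m))| · Π_{i=1}^m |det ∂_yη(x,y_i)|, where Ψ_j(x,y) := ∂_xρ_j(x,y) − ∂_yρ_j(x,y)(∂_yη(x,y))^{−1}∂_xη(x,y) and (Ψ₁;…;Ψ_m) denotes the n×n matrix obtained by stacking the k_i×n blocks Ψ_i. -/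
open Matrix

lemma aux_left {E F : Type*} [NormedAddCommGroup E] [NormedSpace ℝ E]
    [NormedAddCommGroup F] [NormedSpace ℝ F]
    (f : E × F → ℝ) (x : E) (z : F) (hf : DifferentiableAt ℝ f (x, z)) (v : E) :
    fderiv ℝ f (x, z) (v, 0) = fderiv ℝ (fun x' => f (x', z)) x v := by
  have h := (hf.hasFDerivAt.comp x (hasFDerivAt_prodMk_left (𝕜 := ℝ) x z)).fderiv
  rw [show (fun x' => f (x', z)) = f ∘ (fun x' : E => (x', z)) from rfl, h]
  rfl

lemma aux_right {E F : Type*} [NormedAddCommGroup E] [NormedSpace ℝ E]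
    [NormedAddCommGroup F] [NormedSpace ℝ F]
    (f : E × F → ℝ) (x : E) (z : F) (hf : DifferentiableAt ℝ f (x, z)) (w : F) :
    fderiv ℝ f (x, z) (0, w) = fderiv ℝ (fun z' => f (x, z')) z w := by
  have h := (hf.hasFDerivAt.comp z (hasFDerivAt_prodMk_right x z)).fderiv
  rw [show (fun z' => f (x, z')) = f ∘ (fun z' : F => (x, z')) from rfl, h]
  rfl

lemma aux_proj {n d m : ℕ} (f : (Fin n → ℝ) × (Fin d → ℝ) → ℝ)
    (x : Fin n → ℝ) (y : Fin m → Fin d → ℝ) (i : Fin m)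
    (hf : DifferentiableAt ℝ f (x, y i))
    (v : Fin n → ℝ) (w : Fin m → Fin d → ℝ) :
    fderiv ℝ (fun p : (Fin n → ℝ) × (Fin m → Fin d → ℝ) => f (p.1, p.2 i)) (x, y) (v, w)
      = fderiv ℝ f (x, y i) (v, w i) := by
  set L : ((Fin n → ℝ) × (Fin m → Fin d → ℝ)) →L[ℝ] ((Fin n → ℝ) × (Fin d → ℝ)) :=
    (ContinuousLinearMap.fst ℝ _ _).prod
      ((ContinuousLinearMap.proj i).comp
        (ContinuousLinearMap.snd ℝ (Fin n → ℝ) (Fin m → Fin d → ℝ))) with hL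
  have h := (hf.hasFDerivAt.comp (x, y) (L.hasFDerivAt)).fderiv
  rw [show (fun p : (Fin n → ℝ) × (Fin m → Fin d → ℝ) => f (p.1, p.2 i)) = f ∘ ⇑L from rfl, h]
  rfl

/-- Block computation of the Jacobian of
`Ψ(x,y₁,…,y_m) = (ρ₁(x,y₁),…,ρ_m(x,y_m), η(x,y₁),…,η(x,y_m))`: at a point where each
`∂_yη(x,y_i)` is invertible,
`|det DΨ| = |det(Ψ₁(x,y₁);…;Ψ_m(x,y_m))| · ∏ᵢ |det ∂_yη(x,y_i)|`, where
`Ψ_j := ∂_xρ_j − ∂_yρ_j (∂_yη)⁻¹ ∂_xη`.  (The absolute value of the determinant is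
independent of the choice of the index-matching equivalences `e`, `e₂`.) -/
theorem stmt_16 (n d m : ℕ) (k : Fin m → ℕ) (hk : ∑ i, k i = n)
    (U : Set ((Fin n → ℝ) × (Fin d → ℝ)))
    (ρ : ∀ i : Fin m, (Fin n → ℝ) → (Fin d → ℝ) → Fin (k i) → ℝ)
    (η : (Fin n → ℝ) → (Fin d → ℝ) → Fin d → ℝ)
    (x : Fin n → ℝ) (y : Fin m → Fin d → ℝ)
    (hmem : ∀ i, (x, y i) ∈ U)
    (hρ : ∀ i a, DifferentiableAt ℝ
      (fun q : (Fin n → ℝ) × (Fin d → ℝ) => ρ i q.1 q.2 a) (x, y i))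
    (hη : ∀ i t, DifferentiableAt ℝ
      (fun q : (Fin n → ℝ) × (Fin d → ℝ) => η q.1 q.2 t) (x, y i))
    (Byη : Fin m → Matrix (Fin d) (Fin d) ℝ)
    (hByη : ∀ i t u, Byη i t u = fderiv ℝ (fun y' => η x y' t) (y i) (Pi.single u 1))
    (hinv : ∀ i, IsUnit (Byη i).det) :
    ∀ (e : (Fin n ⊕ Fin m × Fin d) ≃ ((Σ i : Fin m, Fin (k i)) ⊕ Fin m × Fin d))
      (e₂ : Fin n ≃ (Σ i : Fin m, Fin (k i))),
      |Matrix.det (Matrix.of fun (r c : Fin n ⊕ Fin m × Fin d) =>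
          fderiv ℝ
            (fun p : (Fin n → ℝ) × (Fin m → Fin d → ℝ) =>
              Sum.elim (fun ia : Σ i : Fin m, Fin (k i) => ρ ia.1 p.1 (p.2 ia.1) ia.2)
                (fun it : Fin m × Fin d => η p.1 (p.2 it.1) it.2) (e r))
            (x, y)
            (Sum.elim
              (fun j : Fin n => ((Pi.single j 1 : Fin n → ℝ), (0 : Fin m → Fin d → ℝ)))
              (fun it : Fin m × Fin d =>
                ((0 : Fin n → ℝ), Pi.single it.1 (Pi.single it.2 1))) c))| =
      |Matrix.det (Matrix.of fun (r c : Fin n) =>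
          ((fun i : Fin m =>
              (Matrix.of fun (a : Fin (k i)) (c' : Fin n) =>
                  fderiv ℝ (fun x' => ρ i x' (y i) a) x (Pi.single c' 1))
                - (Matrix.of fun (a : Fin (k i)) (t : Fin d) =>
                    fderiv ℝ (fun y' => ρ i x y' a) (y i) (Pi.single t 1))
                  * (Byη i)⁻¹
                  * (Matrix.of fun (t : Fin d) (c' : Fin n) =>
                      fderiv ℝ (fun x' => η x' (y i) t) x (Pi.single c' 1)))
            (e₂ r).1 (e₂ r).2 c))| *
      ∏ i, |Matrix.det (Byη i)| := by
  intro e e₂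
  classical
  -- block pieces
  set Ax : ∀ i : Fin m, Matrix (Fin (k i)) (Fin n) ℝ :=
    fun i => Matrix.of fun a c => fderiv ℝ (fun x' => ρ i x' (y i) a) x (Pi.single c 1) with hAx
  set Ay : ∀ i : Fin m, Matrix (Fin (k i)) (Fin d) ℝ :=
    fun i => Matrix.of fun a t => fderiv ℝ (fun y' => ρ i x y' a) (y i) (Pi.single t 1) with hAy
  set Cx : ∀ i : Fin m, Matrix (Fin d) (Fin n) ℝ :=
    fun i => Matrix.of fun t c => fderiv ℝ (fun x' => η x' (y i) t) x (Pi.single c 1) with hCx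
  set pc : (Fin m × Fin d) ≃ (Fin d × Fin m) := Equiv.prodComm _ _ with hpc
  set D : Matrix (Fin m × Fin d) (Fin m × Fin d) ℝ :=
    (Matrix.blockDiagonal Byη).submatrix pc pc with hD
  set Dinv : Matrix (Fin m × Fin d) (Fin m × Fin d) ℝ :=
    (Matrix.blockDiagonal fun i => (Byη i)⁻¹).submatrix pc pc with hDinv
  set A : Matrix (Fin n) (Fin n) ℝ := Matrix.of fun r c => Ax (e₂ r).1 (e₂ r).2 c with hA
  set B : Matrix (Fin n) (Fin m × Fin d) ℝ :=
    Matrix.of fun r lu => if (e₂ r).1 = lu.1 then Ay (e₂ r).1 (e₂ r).2 lu.2 else 0 with hB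
  set C : Matrix (Fin m × Fin d) (Fin n) ℝ := Matrix.of fun it c => Cx it.1 it.2 c with hC
  have hDapp : ∀ it lu, D it lu = if it.1 = lu.1 then Byη it.1 it.2 lu.2 else 0 := by
    intro it lu
    simp [hD, Matrix.blockDiagonal_apply, hpc]
  have hDinvapp : ∀ it lu, Dinv it lu = if it.1 = lu.1 then (Byη it.1)⁻¹ it.2 lu.2 else 0 := by
    intro it lu
    simp [hDinv, Matrix.blockDiagonal_apply, hpc]
  have hDdet : D.det = ∏ i, (Byη i).det := by
    rw [hD, Matrix.det_submatrix_equiv_self, Matrix.det_blockDiagonal]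
  haveI : Invertible D := Matrix.invertibleOfIsUnitDet D (by
    rw [hDdet, isUnit_iff_ne_zero, Finset.prod_ne_zero_iff]
    exact fun i _ => (hinv i).ne_zero)
  have hright : D * Dinv = 1 := by
    rw [hD, hDinv, Matrix.submatrix_mul_equiv, ← Matrix.blockDiagonal_mul]
    have h1 : (fun i => Byη i * (Byη i)⁻¹) = (1 : Fin m → Matrix (Fin d) (Fin d) ℝ) := by
      funext i; exact Matrix.mul_nonsing_inv _ (hinv i)
    rw [h1, Matrix.blockDiagonal_one, Matrix.submatrix_one_equiv]
  have hIO : ⅟D = Dinv := invOf_eq_right_inv hright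
  set σ : (Fin n ⊕ Fin m × Fin d) ≃ (Fin n ⊕ Fin m × Fin d) :=
    e.trans (Equiv.sumCongr e₂ (Equiv.refl (Fin m × Fin d))).symm with hσ
  -- the big Jacobian matrix equals a row permutation of the block matrix
  have hM : (Matrix.of fun (r c : Fin n ⊕ Fin m × Fin d) =>
          fderiv ℝ
            (fun p : (Fin n → ℝ) × (Fin m → Fin d → ℝ) =>
              Sum.elim (fun ia : Σ i : Fin m, Fin (k i) => ρ ia.1 p.1 (p.2 ia.1) ia.2)
                (fun it : Fin m × Fin d => η p.1 (p.2 it.1) it.2) (e r))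
            (x, y)
            (Sum.elim
              (fun j : Fin n => ((Pi.single j 1 : Fin n → ℝ), (0 : Fin m → Fin d → ℝ)))
              (fun it : Fin m × Fin d =>
                ((0 : Fin n → ℝ), Pi.single it.1 (Pi.single it.2 1))) c))
      = (Matrix.fromBlocks A B C D).submatrix ⇑σ ⇑(Equiv.refl (Fin n ⊕ Fin m × Fin d)) := by
    ext r c
    simp only [Matrix.submatrix_apply, Matrix.of_apply, Equiv.refl_apply]
    rcases he : e r with ia | it
    · obtain ⟨s, rfl⟩ : ∃ s, ia = e₂ s := ⟨e₂.symm ia, (e₂.apply_symm_apply ia).symm⟩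
      have hσr : σ r = Sum.inl s := by simp [hσ, he]
      rw [hσr]
      simp only [Sum.elim_inl]
      rcases c with j | lu
      · simp only [Sum.elim_inl, Matrix.fromBlocks_apply₁₁]
        exact (aux_proj (fun q => ρ (e₂ s).1 q.1 q.2 (e₂ s).2) x y (e₂ s).1
            (hρ _ _) (Pi.single j 1) 0).trans
          (aux_left (fun q => ρ (e₂ s).1 q.1 q.2 (e₂ s).2) x (y (e₂ s).1) (hρ _ _)
            (Pi.single j 1))
      · obtain ⟨l, u⟩ := lu
        simp only [Sum.elim_inr, Matrix.fromBlocks_apply₁₂]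
        refine (aux_proj (fun q => ρ (e₂ s).1 q.1 q.2 (e₂ s).2) x y (e₂ s).1 (hρ _ _) 0
          (Pi.single l (Pi.single u 1))).trans ?_
        by_cases hl : l = (e₂ s).1
        · rw [hl, Pi.single_eq_same]
          refine (aux_right (fun q => ρ (e₂ s).1 q.1 q.2 (e₂ s).2) x (y (e₂ s).1) (hρ _ _)
            (Pi.single u 1)).trans ?_
          exact (if_pos rfl).symm
        · rw [Pi.single_eq_of_ne (Ne.symm hl)]
          rw [show ((0 : Fin n → ℝ), (0 : Fin d → ℝ)) = (0 : (Fin n → ℝ) × (Fin d → ℝ)) from rfl,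
            map_zero]
          exact (if_neg (fun h => hl h.symm)).symm
    · obtain ⟨i, t⟩ := it
      have hσr : σ r = Sum.inr (i, t) := by simp [hσ, he]
      rw [hσr]
      simp only [Sum.elim_inr]
      rcases c with j | lu
      · simp only [Sum.elim_inl, Matrix.fromBlocks_apply₂₁]
        exact (aux_proj (fun q => η q.1 q.2 t) x y i (hη i t) (Pi.single j 1) 0).trans
          (aux_left (fun q => η q.1 q.2 t) x (y i) (hη i t) (Pi.single j 1))
      · obtain ⟨l, u⟩ := lu
        simp only [Sum.elim_inr, Matrix.fromBlocks_apply₂₂]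
        rw [hDapp]
        refine (aux_proj (fun q => η q.1 q.2 t) x y i (hη i t) 0
          (Pi.single l (Pi.single u 1))).trans ?_
        by_cases hl : l = i
        · subst hl
          rw [Pi.single_eq_same, if_pos rfl]
          exact (aux_right (fun q => η q.1 q.2 t) x (y l) (hη l t) (Pi.single u 1)).trans
            (hByη l t u).symm
        · rw [Pi.single_eq_of_ne (Ne.symm hl), if_neg (fun h => hl h.symm)]
          rw [show ((0 : Fin n → ℝ), (0 : Fin d → ℝ)) = (0 : (Fin n → ℝ) × (Fin d → ℝ)) from rfl,
            map_zero]
  -- Schur complement equals the stacked matrix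
  have hDC : ∀ (it : Fin m × Fin d) (c : Fin n),
      (Dinv * C) it c = ((Byη it.1)⁻¹ * Cx it.1) it.2 c := by
    intro it c
    rw [Matrix.mul_apply, Fintype.sum_prod_type, Matrix.mul_apply]
    rw [Finset.sum_comm]
    simp only [hDinvapp, hC, Matrix.of_apply, ite_mul, zero_mul]
    simp [Finset.sum_ite_eq]
  have hBDC : B * Dinv * C = Matrix.of (fun r c =>
      (Ay (e₂ r).1 * ((Byη (e₂ r).1)⁻¹ * Cx (e₂ r).1)) (e₂ r).2 c) := by
    rw [Matrix.mul_assoc]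
    ext r c
    rw [Matrix.mul_apply]
    simp only [hDC, hB, Matrix.of_apply]
    rw [Fintype.sum_prod_type]
    simp only [ite_mul, zero_mul]
    rw [Finset.sum_comm]
    simp only [Finset.sum_ite_eq, Finset.mem_univ, if_true]
    simp [Matrix.mul_apply]
  have hS : A - B * Dinv * C = (Matrix.of fun (r c : Fin n) =>
          ((fun i : Fin m =>
              (Matrix.of fun (a : Fin (k i)) (c' : Fin n) =>
                  fderiv ℝ (fun x' => ρ i x' (y i) a) x (Pi.single c' 1))
                - (Matrix.of fun (a : Fin (k i)) (t : Fin d) =>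
                    fderiv ℝ (fun y' => ρ i x y' a) (y i) (Pi.single t 1))
                  * (Byη i)⁻¹
                  * (Matrix.of fun (t : Fin d) (c' : Fin n) =>
                      fderiv ℝ (fun x' => η x' (y i) t) x (Pi.single c' 1)))
            (e₂ r).1 (e₂ r).2 c)) := by
    ext r c
    rw [Matrix.sub_apply, hBDC]
    simp only [hA, Matrix.of_apply]
    show Ax (e₂ r).1 (e₂ r).2 c - (Ay (e₂ r).1 * ((Byη (e₂ r).1)⁻¹ * Cx (e₂ r).1)) (e₂ r).2 c
      = (Ax (e₂ r).1 - Ay (e₂ r).1 * (Byη (e₂ r).1)⁻¹ * Cx (e₂ r).1) (e₂ r).2 c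
    rw [Matrix.sub_apply, Matrix.mul_assoc]
  rw [hM, Matrix.abs_det_submatrix_equiv_equiv σ (Equiv.refl _),
    Matrix.det_fromBlocks₂₂, hIO, abs_mul, hDdet, Finset.abs_prod, hS]
  exact mul_comm _ _
end
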